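/- Fix an integer p ≥ 1 and β ∈ ℝ. Let A(β) and B(β) be the (p+1)² × (p+1)² real matrices with rows and columns indexed by pairs (j,k) ∈ {0,…,p}², defined by: A(β) has entry C(k,l)·C(j,m)·(j−m)!·β^{(k−l)+(j−m)} at position ((j,k),(m,l)) whenever 0 ≤ m ≤ j, 0 ≤ l ≤ k and k−l = j−m, and entry 0 otherwise; B(β) has entry (−1)^{j−m}·C(k,j−m)·C(j,m)·(j−m)!·β^{2(j−m)} at position ((j,k),(m,l)) whenever 0 ≤ m ≤ j and l = k−j+m ≥ 0, and entry 0 otherwise. Then A(β)·B(β) = B(β)·A(β) = Id, i.e. B(β) is the inverse matrix of A(β). -/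

import Mathlib

/-- The matrix `A(β)`: rows and columns indexed by pairs `(j,k) ∈ {0,…,p}²`, with entry
`C(k,l)⬝C(j,m)⬝(j−m)!⬝β^{(k−l)+(j−m)}` at `((j,k),(m,l))` whenever `m ≤ j`, `l ≤ k` and
`k − l = j − m`, and `0` otherwise. -/
noncomputable def matA (p : ℕ) (β : ℝ) :
    Matrix (Fin (p + 1) × Fin (p + 1)) (Fin (p + 1) × Fin (p + 1)) ℝ :=
  fun jk ml =>
    if (ml.1 : ℕ) ≤ (jk.1 : ℕ) ∧ (ml.2 : ℕ) ≤ (jk.2 : ℕ)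
        ∧ (jk.2 : ℕ) - (ml.2 : ℕ) = (jk.1 : ℕ) - (ml.1 : ℕ) then
      ((jk.2 : ℕ).choose (ml.2 : ℕ) * (jk.1 : ℕ).choose (ml.1 : ℕ)
          * ((jk.1 : ℕ) - (ml.1 : ℕ)).factorial : ℝ)
        * β ^ (((jk.2 : ℕ) - (ml.2 : ℕ)) + ((jk.1 : ℕ) - (ml.1 : ℕ)))
    else 0

/-- The matrix `B(β)`: entry `(−1)^{j−m}⬝C(k,j−m)⬝C(j,m)⬝(j−m)!⬝β^{2(j−m)}` at
`((j,k),(m,l))` whenever `m ≤ j` and `l = k − j + m ≥ 0`, and `0` otherwise. -/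
noncomputable def matB (p : ℕ) (β : ℝ) :
    Matrix (Fin (p + 1) × Fin (p + 1)) (Fin (p + 1) × Fin (p + 1)) ℝ :=
  fun jk ml =>
    if (ml.1 : ℕ) ≤ (jk.1 : ℕ) ∧ (ml.2 : ℤ) = (jk.2 : ℤ) - (jk.1 : ℤ) + (ml.1 : ℤ) then
      (-1 : ℝ) ^ ((jk.1 : ℕ) - (ml.1 : ℕ))
        * ((jk.2 : ℕ).choose ((jk.1 : ℕ) - (ml.1 : ℕ)) * (jk.1 : ℕ).choose (ml.1 : ℕ)
            * ((jk.1 : ℕ) - (ml.1 : ℕ)).factorial : ℝ)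
        * β ^ (2 * ((jk.1 : ℕ) - (ml.1 : ℕ)))
    else 0

/-- Common form of the entries of `matA` (with `ε = 1`) and `matB` (with `ε = -1`),
as a function of natural-number indices. -/
noncomputable def entE (β ε : ℝ) (j k m l : ℕ) : ℝ :=
  if m ≤ j ∧ l + j = k + m then
    ε ^ (j - m)
      * ((k.choose (j - m) * j.choose m * (j - m).factorial : ℕ) : ℝ)
      * β ^ (2 * (j - m))
  else 0

lemma matA_apply (p : ℕ) (β : ℝ) (jk ml : Fin (p + 1) × Fin (p + 1)) :
    matA p β jk ml = entE β 1 (jk.1 : ℕ) (jk.2 : ℕ) (ml.1 : ℕ) (ml.2 : ℕ) := by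
  unfold matA entE
  by_cases h : (ml.1 : ℕ) ≤ (jk.1 : ℕ) ∧ (ml.2 : ℕ) ≤ (jk.2 : ℕ)
      ∧ (jk.2 : ℕ) - (ml.2 : ℕ) = (jk.1 : ℕ) - (ml.1 : ℕ)
  · rw [if_pos h, if_pos (by omega)]
    obtain ⟨h1, h2, h3⟩ := h
    have hch : (jk.2 : ℕ).choose (ml.2 : ℕ)
        = (jk.2 : ℕ).choose ((jk.1 : ℕ) - (ml.1 : ℕ)) := by
      have e2 : (ml.2 : ℕ) = (jk.2 : ℕ) - ((jk.1 : ℕ) - (ml.1 : ℕ)) := by omega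
      rw [e2]
      exact Nat.choose_symm (by omega)
    rw [hch, h3, one_pow, one_mul, two_mul]
    push_cast
    ring
  · rw [if_neg h, if_neg (fun hh => h ⟨hh.1, by omega, by omega⟩)]

lemma matB_apply (p : ℕ) (β : ℝ) (jk ml : Fin (p + 1) × Fin (p + 1)) :
    matB p β jk ml = entE β (-1) (jk.1 : ℕ) (jk.2 : ℕ) (ml.1 : ℕ) (ml.2 : ℕ) := by
  unfold matB entE
  by_cases h : (ml.1 : ℕ) ≤ (jk.1 : ℕ)
      ∧ (ml.2 : ℤ) = (jk.2 : ℤ) - (jk.1 : ℤ) + (ml.1 : ℤ)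
  · rw [if_pos h, if_pos (by omega)]
    push_cast
    ring
  · rw [if_neg h, if_neg (fun hh => h ⟨hh.1, by omega⟩)]

/-- The key binomial identity. -/
lemma choose_key (j m k l d i : ℕ) (hmj : m ≤ j) (hd : d = j - m)
    (hl : l + d = k) (hi : i ≤ d) :
    (k.choose (d - i) * j.choose (m + i) * (d - i).factorial)
      * ((l + i).choose i * (m + i).choose m * i.factorial)
    = (j.choose m * k.choose d * d.factorial) * d.choose i := by
  have h1 : j.choose (m + i) * (m + i).choose m = j.choose m * d.choose i := by
    rw [Nat.choose_mul (by omega)]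
    congr 2 <;> omega
  have h2 : k.choose (d - i) * (l + i).choose i = k.choose d * d.choose i := by
    have h := Nat.choose_mul (n := k) (show d - i ≤ d by omega)
    have e1 : k - (d - i) = l + i := by omega
    have e2 : d - (d - i) = i := by omega
    rw [e1, e2] at h
    rw [← h, Nat.choose_symm hi]
  have h3 : d.choose i * i.factorial * (d - i).factorial = d.factorial :=
    Nat.choose_mul_factorial_mul_factorial hi
  calc (k.choose (d - i) * j.choose (m + i) * (d - i).factorial)
        * ((l + i).choose i * (m + i).choose m * i.factorial)
      = (k.choose (d - i) * (l + i).choose i)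
          * (j.choose (m + i) * (m + i).choose m)
          * ((d - i).factorial * i.factorial) := by ring
    _ = (k.choose d * d.choose i) * (j.choose m * d.choose i)
          * ((d - i).factorial * i.factorial) := by rw [h1, h2]
    _ = (j.choose m * k.choose d * d.factorial) * d.choose i := by
          rw [← h3]; ring

lemma entE_sum (β ε ε' : ℝ) (hε : ε' = -ε) (p j k m l : ℕ)
    (hj : j ≤ p) (hk : k ≤ p) (hm : m ≤ p) (hl : l ≤ p) :
    ∑ a ∈ Finset.range (p + 1), ∑ b ∈ Finset.range (p + 1),
      entE β ε j k a b * entE β ε' a b m l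
    = if j = m ∧ k = l then 1 else 0 := by
  by_cases hc : m ≤ j ∧ l + j = k + m
  · obtain ⟨hmj, hlk⟩ := hc
    set d : ℕ := j - m with hd
    have hdk : d ≤ k := by omega
    -- collapse the inner sum
    have hinner : ∀ a ∈ Finset.range (p + 1),
        (∑ b ∈ Finset.range (p + 1), entE β ε j k a b * entE β ε' a b m l)
        = entE β ε j k a (l + a - m) * entE β ε' a (l + a - m) m l := by
      intro a _
      apply Finset.sum_eq_single (l + a - m)
      · intro b _ hb
        unfold entE
        split_ifs with p1 p2
        · exact absurd (by omega : b = l + a - m) hb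
        · exact mul_zero _
        · exact zero_mul _
        · exact zero_mul _
      · intro hno
        unfold entE
        split_ifs with p1 p2
        · exact absurd (Finset.mem_range.2 (by omega)) hno
        · exact mul_zero _
        · exact zero_mul _
        · exact zero_mul _
    rw [Finset.sum_congr rfl hinner]
    -- restrict to the interval [m, j]
    have hsub : ∑ a ∈ Finset.range (p + 1),
        entE β ε j k a (l + a - m) * entE β ε' a (l + a - m) m l
        = ∑ a ∈ Finset.Icc m j,
            entE β ε j k a (l + a - m) * entE β ε' a (l + a - m) m l := by
      symm
      apply Finset.sum_subset
      · intro a ha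
        simp only [Finset.mem_Icc] at ha
        exact Finset.mem_range.2 (by omega)
      · intro a _ ha
        simp only [Finset.mem_Icc] at ha
        unfold entE
        split_ifs with p1 p2
        · exact absurd ⟨p2.1, p1.1⟩ ha
        · exact mul_zero _
        · exact zero_mul _
        · exact zero_mul _
    rw [hsub, ← Finset.Ico_add_one_right_eq_Icc, Finset.sum_Ico_eq_sum_range]
    have hrange : j + 1 - m = d + 1 := by omega
    rw [hrange]
    -- compute each term
    set c : ℝ := ε ^ d * ((j.choose m * k.choose d * d.factorial : ℕ) : ℝ)
        * β ^ (2 * d) with hcdef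
    have hterm : ∀ i ∈ Finset.range (d + 1),
        entE β ε j k (m + i) (l + (m + i) - m) * entE β ε' (m + i) (l + (m + i) - m) m l
        = c * ((-1 : ℝ) ^ i * (d.choose i : ℝ)) := by
      intro i hi
      rw [Finset.mem_range] at hi
      have hid : i ≤ d := by omega
      have e0 : l + (m + i) - m = l + i := by omega
      rw [e0]
      unfold entE
      rw [if_pos (by omega), if_pos (by omega)]
      have e1 : j - (m + i) = d - i := by omega
      have e2 : m + i - m = i := by omega
      rw [e1, e2]
      have hnat := choose_key j m k l d i hmj hd (by omega) hid
      have hcast : ((k.choose (d - i) * j.choose (m + i) * (d - i).factorial : ℕ) : ℝ)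
          * (((l + i).choose i * (m + i).choose m * i.factorial : ℕ) : ℝ)
          = ((j.choose m * k.choose d * d.factorial : ℕ) : ℝ) * (d.choose i : ℝ) := by
        rw [← Nat.cast_mul, hnat]
        push_cast
        ring
      have hpow1 : ε ^ (d - i) * ε' ^ i = ε ^ d * (-1 : ℝ) ^ i := by
        rw [hε, neg_pow]
        rw [show ε ^ d = ε ^ (d - i) * ε ^ i by rw [← pow_add]; congr 1; omega]
        ring
      have hpow2 : β ^ (2 * (d - i)) * β ^ (2 * i) = β ^ (2 * d) := by
        rw [← pow_add]; congr 1; omega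
      calc ε ^ (d - i) * ((k.choose (d - i) * j.choose (m + i) * (d - i).factorial : ℕ) : ℝ)
            * β ^ (2 * (d - i))
            * (ε' ^ i * (((l + i).choose i * (m + i).choose m * i.factorial : ℕ) : ℝ)
              * β ^ (2 * i))
          = (ε ^ (d - i) * ε' ^ i)
            * (((k.choose (d - i) * j.choose (m + i) * (d - i).factorial : ℕ) : ℝ)
              * (((l + i).choose i * (m + i).choose m * i.factorial : ℕ) : ℝ))
            * (β ^ (2 * (d - i)) * β ^ (2 * i)) := by ring
        _ = (ε ^ d * (-1 : ℝ) ^ i)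
            * (((j.choose m * k.choose d * d.factorial : ℕ) : ℝ) * (d.choose i : ℝ))
            * β ^ (2 * d) := by rw [hcast, hpow1, hpow2]
        _ = c * ((-1 : ℝ) ^ i * (d.choose i : ℝ)) := by rw [hcdef]; ring
    rw [Finset.sum_congr rfl hterm, ← Finset.mul_sum]
    have halt : (∑ i ∈ Finset.range (d + 1), (-1 : ℝ) ^ i * (d.choose i : ℝ))
        = if d = 0 then 1 else 0 := by
      have h := Int.alternating_sum_range_choose (n := d)
      have : ((∑ i ∈ Finset.range (d + 1), (-1 : ℤ) ^ i * (d.choose i : ℤ) : ℤ) : ℝ)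
          = ∑ i ∈ Finset.range (d + 1), (-1 : ℝ) ^ i * (d.choose i : ℝ) := by
        push_cast
        ring
      rw [← this, h]
      split_ifs <;> simp
    rw [halt]
    by_cases hd0 : d = 0
    · have hjm : j = m := by omega
      have hkl : k = l := by omega
      rw [if_pos hd0, if_pos ⟨hjm, hkl⟩, hcdef, hd0, hjm]
      simp
    · rw [if_neg hd0, if_neg (by intro hh; exact hd0 (by omega))]
      exact mul_zero _
  · rw [if_neg (by intro hh; exact hc (by omega))]
    apply Finset.sum_eq_zero
    intro a _
    apply Finset.sum_eq_zero
    intro b _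
    unfold entE
    split_ifs with p1 p2
    · exact absurd ⟨by omega, by omega⟩ hc
    · exact mul_zero _
    · exact zero_mul _
    · exact zero_mul _

lemma fin_prod_sum_eq (n : ℕ) (f : ℕ → ℕ → ℝ) :
    ∑ x : Fin (n + 1) × Fin (n + 1), f (x.1 : ℕ) (x.2 : ℕ)
      = ∑ a ∈ Finset.range (n + 1), ∑ b ∈ Finset.range (n + 1), f a b := by
  rw [Fintype.sum_prod_type]
  simp only [Fin.sum_univ_eq_sum_range]
  rw [Fin.sum_univ_eq_sum_range (fun a => ∑ b ∈ Finset.range (n + 1), f a b)]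

lemma entE_mul_matrix (p : ℕ) (β ε ε' : ℝ) (hε : ε' = -ε)
    (M N : Matrix (Fin (p + 1) × Fin (p + 1)) (Fin (p + 1) × Fin (p + 1)) ℝ)
    (hM : ∀ jk ml, M jk ml = entE β ε (jk.1 : ℕ) (jk.2 : ℕ) (ml.1 : ℕ) (ml.2 : ℕ))
    (hN : ∀ jk ml, N jk ml = entE β ε' (jk.1 : ℕ) (jk.2 : ℕ) (ml.1 : ℕ) (ml.2 : ℕ)) :
    M * N = 1 := by
  ext jk ml
  rw [Matrix.mul_apply, Matrix.one_apply]
  simp only [hM, hN]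
  have key := entE_sum β ε ε' hε p (jk.1 : ℕ) (jk.2 : ℕ) (ml.1 : ℕ) (ml.2 : ℕ)
    (by omega) (by omega) (by omega) (by omega)
  have hsum := fin_prod_sum_eq p (fun a b =>
    entE β ε (jk.1 : ℕ) (jk.2 : ℕ) a b * entE β ε' a b (ml.1 : ℕ) (ml.2 : ℕ))
  rw [hsum, key]
  by_cases h : jk = ml
  · rw [if_pos (by rw [h]; exact ⟨rfl, rfl⟩), if_pos h]
  · rw [if_neg (fun hh => h (Prod.ext_iff.2 ⟨Fin.ext hh.1, Fin.ext hh.2⟩)), if_neg h]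

/-- `B(β)` is the two-sided inverse of `A(β)`. -/
theorem matB_is_inverse_of_matA (p : ℕ) (hp : 1 ≤ p) (β : ℝ) :
    matA p β * matB p β = 1 ∧ matB p β * matA p β = 1 := by
  constructor
  · exact entE_mul_matrix p β 1 (-1) (by norm_num) _ _
      (matA_apply p β) (matB_apply p β)
  · exact entE_mul_matrix p β (-1) 1 (by norm_num) _ _
      (matB_apply p β) (matA_apply p β)
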